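/- Conditional Excluded Middle is valid in Cooper semantics with quasi-disjunction: for all a,b ∈ {0,1/2,1}, f∨'(f→(a,b), f→(a, f¬(b))) ≥ 1/2, i.e., the formula (A→B) ∨ (A→¬B) never takes the value 0. -/
import Mathlib


/-- The set of trivalent truth values {0, 1/2, 1} inside ℚ. -/
def Tri (x : ℚ) : Prop := x = 0 ∨ x = 1/2 ∨ x = 1

/-- Cooper conditional: f→(0,y)=1/2, f→(1,y)=y, f→(1/2,y)=y (on trivalent values). -/
def tcond (a b : ℚ) : ℚ := if a = 0 then 1/2 else b

/-- Quasi-conjunction. -/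
def tand (a b : ℚ) : ℚ :=
  if a = 0 ∨ b = 0 then 0 else if a = 1 ∨ b = 1 then 1 else 1/2

/-- Quasi-disjunction. -/
def tor (a b : ℚ) : ℚ :=
  if a = 1 ∨ b = 1 then 1 else if a = 0 ∨ b = 0 then 0 else 1/2

/-- Strong Kleene negation. -/
def tneg (a : ℚ) : ℚ := 1 - a

/-- Conditional Excluded Middle: (A→B) ∨' (A→¬B) always takes a designated value. -/
theorem conditional_excluded_middle (a b : ℚ) (ha : Tri a) (hb : Tri b) :
    1/2 ≤ tor (tcond a b) (tcond a (tneg b)) := by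
  rcases ha with rfl|rfl|rfl <;> rcases hb with rfl|rfl|rfl <;> norm_num [tor, tcond, tneg]
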